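/- arXiv:1509.00354 — 6 statements merged into one kernel-verified Lean document; each statement's English description precedes it below -/
import Mathlib

section
/- If ρ + cos(π/n) < 0, then the matrix à = DB, where D is the diagonal matrix with entries k(n-k) for k = 1,…,n-1 and B is the tridiagonal Toeplitz matrix with diagonal ρ and off-diagonals 1/2, has all eigenvalues real and strictly negative. -/
open Real

open Finset


lemma amgm (s t x y : ℝ) (hs : 0 < s) (ht : 0 < t) :
    x * y ≤ t / (2*s) * x^2 + s / (2*t) * y^2 := by
  rw [div_mul_eq_mul_div, div_mul_eq_mul_div, div_add_div _ _ (by positivity) (by positivity),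
    le_div_iff₀ (by positivity)]
  nlinarith [sq_nonneg (t*x - s*y), mul_pos hs ht]

lemma key_ineq (n : ℕ) (hn : 2 ≤ n) (X : ℕ → ℝ) (hX : X (n-1) = 0) :
    ∑ k ∈ Finset.range (n-1), X k * X (k+1) ≤
      Real.cos (π / n) * ∑ k ∈ Finset.range (n-1), X k ^ 2 := by
  set m := n - 1 with hm
  set c := Real.cos (π / n) with hc
  set s : ℕ → ℝ := fun k => Real.sin (k * π / n) with hs
  have hn0 : (0:ℝ) < n := by positivity
  have hspos : ∀ k, 1 ≤ k → k ≤ m → 0 < s k := by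
    intro k h1 h2
    apply Real.sin_pos_of_pos_of_lt_pi
    · have : (1:ℝ) ≤ k := by exact_mod_cast h1
      have := Real.pi_pos
      positivity
    · have hk : (k:ℝ) < n := by exact_mod_cast lt_of_le_of_lt h2 (by omega)
      rw [div_lt_iff₀ hn0]
      have := Real.pi_pos
      nlinarith
  have hsn : s n = 0 := by
    simp only [hs]
    have : (n:ℝ) * π / n = π := by field_simp
    rw [this, Real.sin_pi]
  have hs0 : s 0 = 0 := by simp [hs]
  have hrec : ∀ k : ℕ, s (k+2) + s k = 2 * c * s (k+1) := by
    intro k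
    simp only [hs, hc]
    push_cast
    rw [show ((k:ℝ)+2)*π/n = ((k:ℝ)+1)*π/n + π/n by ring,
      show (k:ℝ)*π/n = ((k:ℝ)+1)*π/n - π/n by ring, Real.sin_add, Real.sin_sub]
    ring
  set A : ℕ → ℝ := fun k => s (k+2) / (2 * s (k+1)) * X k ^ 2 with hA
  set f : ℕ → ℝ := fun j => s j / (2 * s (j+1)) * X j ^ 2 with hf
  have pointwise : ∀ k ∈ Finset.range m, X k * X (k+1) ≤ A k + f (k+1) := by
    intro k hk
    rw [Finset.mem_range] at hk
    by_cases h : k + 1 < m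
    · exact amgm (s (k+1)) (s (k+2)) _ _ (hspos (k+1) (by omega) (by omega))
        (hspos (k+2) (by omega) (by omega))
    · have hk1 : k + 1 = m := by omega
      have hX1 : X (k+1) = 0 := by rw [hk1]; exact hX
      have hs2 : s (k+2) = 0 := by rw [show k+2 = n by omega]; exact hsn
      simp [hA, hf, hX1, hs2]
  have hsum1 : ∑ k ∈ Finset.range m, f (k+1) = ∑ k ∈ Finset.range m, f k := by
    have h1 := Finset.sum_range_succ' f m
    have hf0 : f 0 = 0 := by simp [hf, hs0]
    have hfm : f m = 0 := by simp [hf, hX]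
    rw [Finset.sum_range_succ] at h1
    linarith
  calc ∑ k ∈ Finset.range m, X k * X (k+1)
      ≤ ∑ k ∈ Finset.range m, (A k + f (k+1)) := Finset.sum_le_sum pointwise
    _ = ∑ k ∈ Finset.range m, A k + ∑ k ∈ Finset.range m, f (k+1) :=
        Finset.sum_add_distrib
    _ = ∑ k ∈ Finset.range m, (A k + f k) := by rw [hsum1, ← Finset.sum_add_distrib]
    _ = ∑ k ∈ Finset.range m, c * X k ^ 2 := by
        apply Finset.sum_congr rfl
        intro k hk
        rw [Finset.mem_range] at hk
        have hsk : s (k+1) ≠ 0 := ne_of_gt (hspos (k+1) (by omega) (by omega))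
        simp only [hA, hf]
        rw [div_mul_eq_mul_div, div_mul_eq_mul_div, ← add_div, ← add_mul, hrec k]
        field_simp
    _ = c * ∑ k ∈ Finset.range m, X k ^ 2 := by rw [Finset.mul_sum]


/-- If `ρ + cos (π/n) < 0`, then the matrix `Ã = D * B`, where `D` is the diagonal matrix
with entries `k (n - k)` for `k = 1,…,n-1` and `B` is the tridiagonal Toeplitz matrix with
diagonal `ρ` and off-diagonals `1/2`, has all eigenvalues real and strictly negative. -/
theorem DB_eigenvalues_real_negative
    (n : ℕ) (hn : 2 ≤ n) (ρ : ℝ) (hρ₁ : -1 ≤ ρ) (hρ₂ : ρ ≤ 0)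
    (hcrit : ρ + Real.cos (π / n) < 0)
    (D B : Matrix (Fin (n - 1)) (Fin (n - 1)) ℝ)
    (hD : ∀ i j : Fin (n - 1),
      D i j = if i = j then ((i.1 + 1 : ℝ) * (n - (i.1 + 1))) else 0)
    (hB : ∀ i j : Fin (n - 1),
      B i j = if i = j then ρ
        else if i.1 + 1 = j.1 ∨ j.1 + 1 = i.1 then (1 : ℝ) / 2 else 0) :
    ∀ μ : ℂ, ∀ v : Fin (n - 1) → ℂ, v ≠ 0 →
      ((D * B).map (Complex.ofReal)).mulVec v = μ • v →
      μ.im = 0 ∧ μ.re < 0 := by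
  intro μ v hv hmul
  set d : Fin (n-1) → ℝ := fun i => ((i.1 + 1 : ℝ) * (n - (i.1 + 1))) with hd
  have hdpos : ∀ i : Fin (n-1), 0 < d i := by
    intro i
    have h1 : i.1 + 1 < n := by omega
    have h2 : ((i.1:ℝ) + 1) < n := by exact_mod_cast h1
    simp only [hd]
    nlinarith [Nat.cast_nonneg (α := ℝ) i.1]
  have hDB : ∀ i j, (D * B) i j = d i * B i j := by
    intro i j
    rw [Matrix.mul_apply, Finset.sum_eq_single i]
    · rw [hD, if_pos rfl]
    · intro k _ hk
      rw [hD, if_neg (fun h => hk h.symm), zero_mul]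
    · intro h; exact absurd (Finset.mem_univ i) h
  set Bv : Fin (n-1) → ℂ := fun i => ∑ j, (B i j : ℂ) * v j with hBvdef
  have hBv : ∀ i, (d i : ℂ) * Bv i = μ * v i := by
    intro i
    have h1 := congrFun hmul i
    simp only [Matrix.mulVec, dotProduct, Matrix.map_apply, Pi.smul_apply,
      smul_eq_mul] at h1
    simp only [hBvdef]
    rw [Finset.mul_sum, ← h1]
    apply Finset.sum_congr rfl
    intro j _
    rw [hDB]
    push_cast
    ring
  -- Q and S
  set Q : ℂ := ∑ i, (starRingEnd ℂ) (v i) * Bv i with hQdef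
  set S : ℝ := ∑ i, Complex.normSq (v i) / d i with hSdef
  have hQS : Q = μ * (S : ℂ) := by
    rw [hQdef, hSdef]
    push_cast
    rw [Finset.mul_sum]
    apply Finset.sum_congr rfl
    intro i _
    have hdne : (d i : ℂ) ≠ 0 := by exact_mod_cast ne_of_gt (hdpos i)
    have h1 : Bv i = μ * v i / (d i : ℂ) := by
      field_simp
      rw [mul_comm]
      exact hBv i
    rw [h1]
    have h2 : (starRingEnd ℂ) (v i) * v i = (Complex.normSq (v i) : ℂ) := by
      rw [mul_comm, Complex.mul_conj]
    calc (starRingEnd ℂ) (v i) * (μ * v i / (d i : ℂ))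
        = μ * ((starRingEnd ℂ) (v i) * v i) / (d i : ℂ) := by ring
      _ = μ * ((Complex.normSq (v i) : ℂ) / (d i : ℂ)) := by rw [h2]; ring
  have hSpos : 0 < S := by
    obtain ⟨i, hi⟩ := Function.ne_iff.mp hv
    rw [hSdef]
    apply Finset.sum_pos'
    · intro j _
      exact div_nonneg (Complex.normSq_nonneg _) (le_of_lt (hdpos j))
    · exact ⟨i, Finset.mem_univ i,
        div_pos (Complex.normSq_pos.mpr hi) (hdpos i)⟩
  have hBs : ∀ i j, B i j = B j i := by
    intro i j
    rw [hB, hB]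
    by_cases h : i = j
    · simp [h]
    · rw [if_neg h, if_neg (Ne.symm h)]; exact if_congr or_comm rfl rfl
  have hQeq : Q = ∑ i, ∑ j, (B i j : ℂ) * ((starRingEnd ℂ) (v i) * v j) := by
    rw [hQdef]
    apply Finset.sum_congr rfl
    intro i _
    simp only [hBvdef]
    rw [Finset.mul_sum]
    apply Finset.sum_congr rfl
    intro j _
    ring
  have hQim : Q.im = 0 := by
    have hT : Q.im = ∑ i, ∑ j, B i j * ((starRingEnd ℂ) (v i) * v j).im := by
      rw [hQeq, Complex.im_sum]
      apply Finset.sum_congr rfl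
      intro i _
      rw [Complex.im_sum]
      apply Finset.sum_congr rfl
      intro j _
      simp [Complex.mul_im]
    set g : Fin (n-1) → Fin (n-1) → ℝ :=
      fun i j => B i j * ((starRingEnd ℂ) (v i) * v j).im with hg
    have hanti : ∀ i j, g i j = - g j i := by
      intro i j
      simp only [hg]
      rw [hBs]
      have : (starRingEnd ℂ) (v i) * v j = (starRingEnd ℂ) ((starRingEnd ℂ) (v j) * v i) := by
        rw [map_mul, Complex.conj_conj]; ring
      rw [this, Complex.conj_im]
      ring
    have h1 : ∑ i, ∑ j, g i j = - ∑ i, ∑ j, g i j := by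
      calc ∑ i, ∑ j, g i j = ∑ j, ∑ i, g i j := Finset.sum_comm
        _ = ∑ j, ∑ i, -(g j i) := by
            apply Finset.sum_congr rfl; intro j _
            apply Finset.sum_congr rfl; intro i _
            rw [← hanti]
        _ = - ∑ j, ∑ i, g j i := by simp [Finset.sum_neg_distrib]
    rw [hT]
    change ∑ i, ∑ j, g i j = 0
    linarith
  -- ℕ-indexed extensions
  set W : ℕ → ℂ := fun k => if h : k < n - 1 then v ⟨k, h⟩ else 0 with hWdef
  set X : ℕ → ℝ := fun k => ‖W k‖ with hXdef
  set t : ℕ → ℕ → ℝ := fun a b => ((starRingEnd ℂ) (W a) * W b).re with htdef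
  set Bn : ℕ → ℕ → ℝ :=
    fun a b => if a = b then ρ else if a + 1 = b ∨ b + 1 = a then (1:ℝ)/2 else 0 with hBndef
  have hW : ∀ i : Fin (n-1), W i.1 = v i := by
    intro i
    simp only [hWdef]
    rw [dif_pos i.isLt]
  have hWzero : ∀ k, n - 1 ≤ k → W k = 0 := by
    intro k hk
    simp only [hWdef]
    rw [dif_neg (by omega)]
  have hBBn : ∀ i j : Fin (n-1), B i j = Bn i.1 j.1 := by
    intro i j
    rw [hB]
    simp only [hBndef]
    by_cases h : i = j
    · rw [if_pos h, if_pos (by rw [h])]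
    · rw [if_neg h, if_neg (fun hh => h (Fin.ext hh))]
  have hQre : Q.re = ∑ a ∈ Finset.range (n-1), ∑ b ∈ Finset.range (n-1), Bn a b * t a b := by
    calc Q.re = ∑ i : Fin (n-1), ∑ j : Fin (n-1), Bn i.1 j.1 * t i.1 j.1 := by
          rw [hQeq, Complex.re_sum]
          apply Finset.sum_congr rfl
          intro i _
          rw [Complex.re_sum]
          apply Finset.sum_congr rfl
          intro j _
          simp only [htdef]
          rw [hW i, hW j, hBBn i j]
          simp [Complex.mul_re]
      _ = ∑ a ∈ Finset.range (n-1), ∑ b ∈ Finset.range (n-1), Bn a b * t a b := by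
          rw [← Fin.sum_univ_eq_sum_range
            (fun a => ∑ b ∈ Finset.range (n-1), Bn a b * t a b) (n-1)]
          apply Finset.sum_congr rfl
          intro i _
          rw [← Fin.sum_univ_eq_sum_range (fun b => Bn i.1 b * t i.1 b) (n-1)]
  have htaa : ∀ a, t a a = X a ^ 2 := by
    intro a
    simp only [htdef, hXdef]
    rw [mul_comm, Complex.mul_conj]
    simp [Complex.sq_norm]
  have hsplit : ∀ a b : ℕ, Bn a b * t a b =
      (if a = b then ρ * t a b else 0) + (if a + 1 = b then t a b / 2 else 0)
        + (if b + 1 = a then t a b / 2 else 0) := by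
    intro a b
    simp only [hBndef]
    split_ifs <;> (try (exfalso; omega)) <;> ring
  have hsplitsum : Q.re
      = (∑ a ∈ Finset.range (n-1), ∑ b ∈ Finset.range (n-1),
          if a = b then ρ * t a b else 0)
      + (∑ a ∈ Finset.range (n-1), ∑ b ∈ Finset.range (n-1),
          if a + 1 = b then t a b / 2 else 0)
      + (∑ a ∈ Finset.range (n-1), ∑ b ∈ Finset.range (n-1),
          if b + 1 = a then t a b / 2 else 0) := by
    rw [hQre, ← Finset.sum_add_distrib, ← Finset.sum_add_distrib]
    apply Finset.sum_congr rfl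
    intro a _
    rw [← Finset.sum_add_distrib, ← Finset.sum_add_distrib]
    exact Finset.sum_congr rfl fun b _ => hsplit a b
  have hT1 : (∑ a ∈ Finset.range (n-1), ∑ b ∈ Finset.range (n-1),
      if a = b then ρ * t a b else 0) = ρ * ∑ a ∈ Finset.range (n-1), X a ^ 2 := by
    rw [Finset.mul_sum]
    apply Finset.sum_congr rfl
    intro a ha
    rw [Finset.sum_ite_eq, if_pos ha, htaa]
  have hT2 : (∑ a ∈ Finset.range (n-1), ∑ b ∈ Finset.range (n-1),
      if a + 1 = b then t a b / 2 else 0)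
      = ∑ a ∈ Finset.range (n-1), t a (a+1) / 2 := by
    apply Finset.sum_congr rfl
    intro a _
    rw [Finset.sum_ite_eq]
    by_cases h : a + 1 ∈ Finset.range (n-1)
    · rw [if_pos h]
    · rw [if_neg h]
      have : W (a+1) = 0 := hWzero _ (by simp [Finset.mem_range] at h; omega)
      simp [htdef, this]
  have hT3 : (∑ a ∈ Finset.range (n-1), ∑ b ∈ Finset.range (n-1),
      if b + 1 = a then t a b / 2 else 0)
      = ∑ b ∈ Finset.range (n-1), t (b+1) b / 2 := by
    rw [Finset.sum_comm]
    apply Finset.sum_congr rfl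
    intro b _
    rw [Finset.sum_ite_eq]
    by_cases h : b + 1 ∈ Finset.range (n-1)
    · rw [if_pos h]
    · rw [if_neg h]
      have : W (b+1) = 0 := hWzero _ (by simp [Finset.mem_range] at h; omega)
      simp [htdef, this]
  have htb : ∀ a : ℕ, t a (a+1) ≤ X a * X (a+1) := by
    intro a
    simp only [htdef, hXdef]
    calc ((starRingEnd ℂ) (W a) * W (a+1)).re
        ≤ ‖(starRingEnd ℂ) (W a) * W (a+1)‖ := Complex.re_le_norm _
      _ = ‖W a‖ * ‖W (a+1)‖ := by
          rw [norm_mul, Complex.norm_conj]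
  have htb' : ∀ a : ℕ, t (a+1) a ≤ X a * X (a+1) := by
    intro a
    simp only [htdef, hXdef]
    calc ((starRingEnd ℂ) (W (a+1)) * W a).re
        ≤ ‖(starRingEnd ℂ) (W (a+1)) * W a‖ := Complex.re_le_norm _
      _ = ‖W a‖ * ‖W (a+1)‖ := by
          rw [norm_mul, Complex.norm_conj, mul_comm]
  have hXn : X (n-1) = 0 := by
    simp only [hXdef]
    rw [hWzero (n-1) le_rfl]
    simp
  have hXsum : 0 < ∑ a ∈ Finset.range (n-1), X a ^ 2 := by
    obtain ⟨i, hi⟩ := Function.ne_iff.mp hv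
    apply Finset.sum_pos'
    · intro a _; positivity
    · refine ⟨i.1, Finset.mem_range.mpr i.isLt, ?_⟩
      have : X i.1 = ‖v i‖ := by rw [hXdef]; simp only; rw [hW i]
      rw [this]
      exact pow_pos (norm_pos_iff.mpr hi) 2
  have hQrelt : Q.re < 0 := by
    have h2 : ∑ a ∈ Finset.range (n-1), t a (a+1) / 2
        ≤ ∑ a ∈ Finset.range (n-1), X a * X (a+1) / 2 :=
      Finset.sum_le_sum fun a _ => by linarith [htb a]
    have h3 : ∑ a ∈ Finset.range (n-1), t (a+1) a / 2
        ≤ ∑ a ∈ Finset.range (n-1), X a * X (a+1) / 2 :=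
      Finset.sum_le_sum fun a _ => by linarith [htb' a]
    have h4 : ∑ a ∈ Finset.range (n-1), X a * X (a+1) / 2
        + ∑ a ∈ Finset.range (n-1), X a * X (a+1) / 2
        = ∑ a ∈ Finset.range (n-1), X a * X (a+1) := by
      rw [← Finset.sum_add_distrib]
      apply Finset.sum_congr rfl
      intro a _; ring
    have h5 := key_ineq n hn X hXn
    have h6 : (ρ + Real.cos (π / n)) * (∑ a ∈ Finset.range (n-1), X a ^ 2)
        = ρ * ∑ a ∈ Finset.range (n-1), X a ^ 2
          + Real.cos (π / n) * ∑ a ∈ Finset.range (n-1), X a ^ 2 := add_mul _ _ _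
    have h7 : (ρ + Real.cos (π / n)) * (∑ a ∈ Finset.range (n-1), X a ^ 2) < 0 :=
      mul_neg_of_neg_of_pos hcrit hXsum
    rw [hsplitsum, hT1, hT2, hT3]
    linarith
  have him : μ.im = 0 := by
    have h1 : Q.im = μ.im * S := by rw [hQS]; simp [Complex.mul_im]
    rw [hQim] at h1
    rcases mul_eq_zero.mp h1.symm with h | h
    · exact h
    · exact absurd h (ne_of_gt hSpos)
  have hre : μ.re < 0 := by
    have h1 : Q.re = μ.re * S := by rw [hQS]; simp [Complex.mul_re]
    rw [h1] at hQrelt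
    nlinarith [hSpos]
  exact ⟨him, hre⟩
end

section
/- Let A be a real n×n matrix of the form A = D + B, where D is diagonal and B has nonnegative entries, and suppose V is a vector with nonnegative entries satisfying A V = 0. Then for any vector W with 0 ≤ W ≤ V coordinatewise and any coordinate m with W(m) = V(m), one has (A W)(m) ≤ 0. Consequently, any solution K_t of dK_t/dt = A K_t with 0 ≤ K_0 ≤ V coordinatewise satisfies K_t ≤ V coordinatewise for all t ≥ 0. -/
open Matrix NormedSpace Nat

section aux
variable {ι : Type*} [Fintype ι] [DecidableEq ι]

/-- entries of exp of an entrywise-nonnegative matrix are nonnegative -/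
lemma exp_entry_nonneg (M : Matrix ι ι ℝ) (hM : ∀ i j, 0 ≤ M i j) (i j : ι) :
    0 ≤ exp M i j := by
  letI : SeminormedRing (Matrix ι ι ℝ) := Matrix.linftyOpSemiNormedRing
  letI : NormedRing (Matrix ι ι ℝ) := Matrix.linftyOpNormedRing
  letI : NormedAlgebra ℝ (Matrix ι ι ℝ) := Matrix.linftyOpNormedAlgebra
  have hpow : ∀ n : ℕ, ∀ i j, 0 ≤ (M ^ n) i j := by
    intro n
    induction n with
    | zero => intro i j; simp [Matrix.one_apply]; positivity
    | succ n ih =>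
      intro i j
      rw [pow_succ, Matrix.mul_apply]
      exact Finset.sum_nonneg fun k _ => mul_nonneg (ih i k) (hM k j)
  have hsum : Summable fun n : ℕ => (n !⁻¹ : ℝ) • M ^ n := expSeries_summable' (𝕂 := ℝ) M
  have h1 : Summable fun n : ℕ => ((n !⁻¹ : ℝ) • M ^ n) i j := by
    have := hsum.map (Matrix.entryLinearMap ℝ ℝ i j).toContinuousLinearMap
      (Matrix.entryLinearMap ℝ ℝ i j).toContinuousLinearMap.continuous
    simpa [Function.comp_def] using this
  have : exp M i j = ∑' n : ℕ, ((n !⁻¹ : ℝ) • M ^ n) i j := by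
    rw [exp_eq_tsum ℝ]
    exact (hsum.hasSum.map (Matrix.entryLinearMap ℝ ℝ i j).toContinuousLinearMap
      (Matrix.entryLinearMap ℝ ℝ i j).toContinuousLinearMap.continuous).tsum_eq.symm
  rw [this]
  refine tsum_nonneg fun n => ?_
  simp only [Matrix.smul_apply, smul_eq_mul]
  exact mul_nonneg (by positivity) (hpow n i j)
end aux

section aux2
variable {ι : Type*} [Fintype ι] [DecidableEq ι]

lemma exp_mulVec_eigen (M : Matrix ι ι ℝ) (V : ι → ℝ) (c : ℝ)
    (hMV : M.mulVec V = c • V) (m : ι) :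
    (exp M).mulVec V m = Real.exp c * V m := by
  have hpow : ∀ n : ℕ, (M ^ n).mulVec V = (c ^ n) • V := by
    intro n
    induction n with
    | zero => simp [Matrix.one_mulVec]
    | succ n ih =>
      rw [pow_succ, ← Matrix.mulVec_mulVec, hMV, Matrix.mulVec_smul, ih,
        smul_smul, mul_comm, ← pow_succ]
  letI : SeminormedRing (Matrix ι ι ℝ) := Matrix.linftyOpSemiNormedRing
  letI : NormedRing (Matrix ι ι ℝ) := Matrix.linftyOpNormedRing
  letI : NormedAlgebra ℝ (Matrix ι ι ℝ) := Matrix.linftyOpNormedAlgebra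
  let f : Matrix ι ι ℝ →ₗ[ℝ] ℝ :=
    { toFun := fun X => X.mulVec V m
      map_add' := fun X Y => by simp [Matrix.add_mulVec]
      map_smul' := fun r X => by simp [Matrix.smul_mulVec] }
  have hsum : Summable fun n : ℕ => ((Nat.factorial n : ℝ)⁻¹) • M ^ n :=
    expSeries_summable' (𝕂 := ℝ) M
  have key : (exp M).mulVec V m = ∑' n : ℕ, f (((Nat.factorial n : ℝ)⁻¹) • M ^ n) := by
    rw [exp_eq_tsum ℝ]
    exact (hsum.hasSum.map f.toContinuousLinearMap
      f.toContinuousLinearMap.continuous).tsum_eq.symm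
  rw [key]
  have : ∀ n : ℕ, f (((Nat.factorial n : ℝ)⁻¹) • M ^ n)
      = ((Nat.factorial n : ℝ)⁻¹ * c ^ n) * V m := by
    intro n
    rw [f.map_smul]
    show (↑(Nat.factorial n) : ℝ)⁻¹ • ((M ^ n) *ᵥ V) m = _
    rw [hpow n]
    simp [mul_assoc]
  simp_rw [this]
  rw [tsum_mul_right]
  congr 1
  rw [Real.exp_eq_exp_ℝ, exp_eq_tsum ℝ]
  simp [smul_eq_mul]
end aux2


/-- Let `A = D + B` with `D` diagonal and `B` entrywise nonnegative, and let `V ≥ 0`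
satisfy `A V = 0`. Then for any `0 ≤ W ≤ V` coordinatewise with `W m = V m`, one has
`(A W) m ≤ 0`; consequently, any solution `K t = exp(tA) K₀` of `dK/dt = A K` with
`0 ≤ K₀ ≤ V` satisfies `K t ≤ V` coordinatewise for all `t ≥ 0`. -/
theorem domination_by_null_vector
    {ι : Type*} [Fintype ι] [DecidableEq ι]
    (A D B : Matrix ι ι ℝ) (hA : A = D + B)
    (hDdiag : ∀ i j : ι, i ≠ j → D i j = 0)
    (hBnonneg : ∀ i j : ι, 0 ≤ B i j)
    (V : ι → ℝ) (hVnonneg : ∀ i, 0 ≤ V i) (hAV : A.mulVec V = 0) :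
    (∀ W : ι → ℝ, (∀ i, 0 ≤ W i) → (∀ i, W i ≤ V i) →
      ∀ m : ι, W m = V m → A.mulVec W m ≤ 0)
    ∧ (∀ K₀ : ι → ℝ, (∀ i, 0 ≤ K₀ i) → (∀ i, K₀ i ≤ V i) →
        ∀ t : ℝ, 0 ≤ t → ∀ m : ι, (NormedSpace.exp (t • A)).mulVec K₀ m ≤ V m) := by
  have hAoff : ∀ i j : ι, i ≠ j → 0 ≤ A i j := by
    intro i j hij
    rw [hA]
    simpa [hDdiag i j hij] using hBnonneg i j
  constructor
  · intro W hW0 hWV m hm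
    have h1 : A.mulVec W m ≤ A.mulVec V m := by
      simp only [Matrix.mulVec, dotProduct]
      refine Finset.sum_le_sum fun j _ => ?_
      rcases eq_or_ne j m with rfl | hj
      · rw [hm]
      · exact mul_le_mul_of_nonneg_left (hWV j) (hAoff m j (Ne.symm hj))
    have h2 : A.mulVec V m = 0 := by rw [hAV]; rfl
    linarith
  · intro K₀ hK0 hKV t ht m
    set c : ℝ := ∑ i, |A i i| with hc
    have hcnn : 0 ≤ c := Finset.sum_nonneg fun i _ => abs_nonneg _
    have hci : ∀ i, -A i i ≤ c := by
      intro i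
      refine (neg_le_abs (A i i)).trans ?_
      exact Finset.single_le_sum (fun j _ => abs_nonneg (A j j)) (Finset.mem_univ i)
    set M : Matrix ι ι ℝ := c • (1 : Matrix ι ι ℝ) + A with hM
    have hMnn : ∀ i j, 0 ≤ M i j := by
      intro i j
      rcases eq_or_ne i j with rfl | hij
      · have : M i i = c + A i i := by simp [hM, Matrix.one_apply]
        rw [this]
        linarith [hci i]
      · have : M i j = A i j := by simp [hM, Matrix.one_apply_ne hij]
        rw [this]; exact hAoff i j hij
    have hMV : M.mulVec V = c • V := by
      rw [hM, Matrix.add_mulVec, hAV, Matrix.smul_mulVec, Matrix.one_mulVec]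
      simp
    -- nonnegativity and eigen for t • M
    have htMnn : ∀ i j, 0 ≤ (t • M) i j := fun i j => by
      simpa using mul_nonneg ht (hMnn i j)
    have htMV : (t • M).mulVec V = (t * c) • V := by
      rw [Matrix.smul_mulVec, hMV, smul_smul]
    have hE : ∀ i j, 0 ≤ NormedSpace.exp (t • M) i j :=
      exp_entry_nonneg (t • M) htMnn
    have heigen : ∀ k, (NormedSpace.exp (t • M)).mulVec V k = Real.exp (t * c) * V k :=
      fun k => exp_mulVec_eigen (t • M) V (t * c) htMV k
    -- decomposition: exp (t • M) = e^{tc} • exp (t • A)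
    have hdecomp : NormedSpace.exp (t • M) =
        Real.exp (t * c) • NormedSpace.exp (t • A) := by
      have h1 : t • M = (t * c) • (1 : Matrix ι ι ℝ) + t • A := by
        rw [hM, smul_add, smul_smul]
      rw [h1, Matrix.exp_add_of_commute ((t * c) • (1 : Matrix ι ι ℝ)) (t • A)
        ((Commute.one_left (t • A)).smul_left (t * c))]
      rw [Matrix.smul_one_eq_diagonal, Matrix.exp_diagonal]
      have : NormedSpace.exp (fun _ : ι => t * c) = fun _ : ι => Real.exp (t * c) := by
        rw [Pi.exp_def]
        funext i
        rw [Real.exp_eq_exp_ℝ]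
      rw [this, ← Matrix.smul_one_eq_diagonal, smul_mul_assoc, one_mul]
    have hmono : (NormedSpace.exp (t • M)).mulVec K₀ m
        ≤ (NormedSpace.exp (t • M)).mulVec V m := by
      simp only [Matrix.mulVec, dotProduct]
      exact Finset.sum_le_sum fun j _ => mul_le_mul_of_nonneg_left (hKV j) (hE m j)
    rw [heigen m, hdecomp, Matrix.smul_mulVec] at hmono
    have hpos : (0:ℝ) < Real.exp (t * c) := Real.exp_pos _
    have := (mul_le_mul_iff_of_pos_left hpos).mp (by simpa using hmono)
    exact this
end

section
/- Let (u¹, u²) ∈ 𝒰 (absolutely continuous, mutually singular, with u¹+u² equivalent to Lebesgue measure). If a, b ∈ I(u) with a < b and I(u) ∩ (a,b) = ∅, then there exists i ∈ {1,2} with (a,b) ⊆ supp(u^i) \ supp(u^{3-i}). -/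
open MeasureTheory

/-- The measure-theoretic support of a measure on `ℝ`. -/
def msupp (u : Measure ℝ) : Set ℝ := {x : ℝ | ∀ ε > 0, 0 < u (Metric.ball x ε)}

lemma msupp_closed (u : Measure ℝ) : IsClosed (msupp u) := by
  rw [← isOpen_compl_iff]
  rw [isOpen_iff_forall_mem_open]
  intro x hx
  simp only [msupp, Set.mem_compl_iff, Set.mem_setOf_eq, not_forall] at hx
  obtain ⟨ε, hε, h0⟩ := hx
  push_neg at h0
  refine ⟨Metric.ball x (ε/2), ?_, Metric.isOpen_ball, by simpa using half_pos hε⟩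
  intro y hy
  simp only [msupp, Set.mem_compl_iff, Set.mem_setOf_eq, not_forall]
  refine ⟨ε/2, ⟨half_pos hε, ?_⟩⟩
  have hsub : Metric.ball y (ε/2) ⊆ Metric.ball x ε := by
    intro z hz
    have := dist_triangle z y x
    simp only [Metric.mem_ball] at *
    linarith
  simp only [not_lt]
  exact le_trans (measure_mono hsub) h0

lemma cover (u₁ u₂ : Measure ℝ) (hequiv₂ : (volume : Measure ℝ) ≪ u₁ + u₂) (x : ℝ) :
    x ∈ msupp u₁ ∪ msupp u₂ := by
  by_contra h
  simp only [Set.mem_union, msupp, Set.mem_setOf_eq, not_or, not_forall] at h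
  obtain ⟨⟨ε₁, hε₁, h1⟩, ⟨ε₂, hε₂, h2⟩⟩ := h
  push_neg at h1 h2
  set ε := min ε₁ ε₂ with hε
  have hεpos : 0 < ε := lt_min hε₁ hε₂
  have h1' : u₁ (Metric.ball x ε) = 0 :=
    le_antisymm (le_trans (measure_mono (Metric.ball_subset_ball (min_le_left _ _))) h1)
      (zero_le)
  have h2' : u₂ (Metric.ball x ε) = 0 :=
    le_antisymm (le_trans (measure_mono (Metric.ball_subset_ball (min_le_right _ _))) h2)
      (zero_le)
  have : (u₁ + u₂) (Metric.ball x ε) = 0 := by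
    simp [Measure.add_apply, h1', h2']
  have hv := hequiv₂ this
  have hpos : (0 : ENNReal) < volume (Metric.ball x ε) := by
    rw [Real.volume_ball]
    simp [hεpos]
  exact hpos.ne' hv

/-- If `a, b` are interface points with `a < b` and there is no interface point strictly
between them, then `(a,b)` is entirely contained in the support of one type and disjoint
from the other. -/
theorem no_interface_interval_single_type
    (u₁ u₂ : Measure ℝ) [IsLocallyFiniteMeasure u₁] [IsLocallyFiniteMeasure u₂]
    (hac₁ : u₁ ≪ volume) (hac₂ : u₂ ≪ volume)
    (hsing : u₁ ⟂ₘ u₂)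
    (hequiv₁ : u₁ + u₂ ≪ volume) (hequiv₂ : (volume : Measure ℝ) ≪ u₁ + u₂)
    (a b : ℝ) (hab : a < b)
    (ha : a ∈ msupp u₁ ∩ msupp u₂) (hb : b ∈ msupp u₁ ∩ msupp u₂)
    (hno : (msupp u₁ ∩ msupp u₂) ∩ Set.Ioo a b = ∅) :
    Set.Ioo a b ⊆ msupp u₁ \ msupp u₂ ∨ Set.Ioo a b ⊆ msupp u₂ \ msupp u₁ := by
  set U : Set ℝ := (msupp u₂)ᶜ ∩ Set.Ioo a b with hU
  set V : Set ℝ := (msupp u₁)ᶜ ∩ Set.Ioo a b with hV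
  have hcov : ∀ x ∈ Set.Ioo a b, x ∈ msupp u₁ ∪ msupp u₂ :=
    fun x _ => cover u₁ u₂ hequiv₂ x
  have hUopen : IsOpen U := ((msupp_closed u₂).isOpen_compl).inter isOpen_Ioo
  have hVopen : IsOpen V := ((msupp_closed u₁).isOpen_compl).inter isOpen_Ioo
  have hdisj : Disjoint U V := by
    rw [Set.disjoint_iff]
    rintro x ⟨⟨h2, hx⟩, ⟨h1, _⟩⟩
    rcases hcov x hx with h | h
    · exact absurd h h1
    · exact absurd h h2
  have hsub : Set.Ioo a b ⊆ U ∪ V := by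
    intro x hx
    have hni : x ∉ msupp u₁ ∩ msupp u₂ := by
      intro hmem
      have : x ∈ (msupp u₁ ∩ msupp u₂) ∩ Set.Ioo a b := ⟨hmem, hx⟩
      rw [hno] at this
      exact this
    by_cases h1 : x ∈ msupp u₁
    · by_cases h2 : x ∈ msupp u₂
      · exact absurd ⟨h1, h2⟩ hni
      · exact Or.inl ⟨h2, hx⟩
    · exact Or.inr ⟨h1, hx⟩
  have hpre : IsPreconnected (Set.Ioo a b) := isPreconnected_Ioo
  rcases hpre.subset_or_subset hUopen hVopen hdisj hsub with h | h
  · left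
    intro x hx
    obtain ⟨h2, _⟩ := h hx
    rcases hcov x hx with h1 | h1
    · exact ⟨h1, h2⟩
    · exact absurd h1 h2
  · right
    intro x hx
    obtain ⟨h1, _⟩ := h hx
    rcases hcov x hx with h2 | h2
    · exact absurd h2 h1
    · exact ⟨h2, h1⟩
end

section
/- Let u¹, u² be mutually singular absolutely continuous nonnegative measures on ℝ with u¹ + u² equal to Lebesgue measure, and let x ∈ supp(u¹) ∩ supp(u²). Then in any open neighborhood O of x there exists a nondegenerate interval A ⊆ O with u¹(A) = u²(A) = |A|/2 > 0. -/
open MeasureTheory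

open Filter Metric Topology Set in
private lemma shift_le (S : Set ℝ) {L t t' : ℝ} (h : t ≤ t') :
    volume (Set.Icc t' (t' + L) ∩ S) ≤
      volume (Set.Icc t (t + L) ∩ S) + ENNReal.ofReal (t' - t) := by
  have hsub : Set.Icc t' (t' + L) ∩ S ⊆ (Set.Icc t (t + L) ∩ S) ∪ Set.Icc (t + L) (t' + L) := by
    rintro u ⟨⟨h1, h2⟩, hS⟩
    rcases le_or_gt u (t + L) with h3 | h3
    · exact Or.inl ⟨⟨le_trans h h1, h3⟩, hS⟩
    · exact Or.inr ⟨h3.le, h2⟩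
  calc volume (Set.Icc t' (t' + L) ∩ S) ≤ _ := measure_mono hsub
    _ ≤ volume (Set.Icc t (t + L) ∩ S) + volume (Set.Icc (t + L) (t' + L)) :=
        measure_union_le _ _
    _ = volume (Set.Icc t (t + L) ∩ S) + ENNReal.ofReal (t' - t) := by
        rw [Real.volume_Icc]; congr 1; ring

open Filter Metric Topology Set in
private lemma shift_le' (S : Set ℝ) {L t t' : ℝ} (h : t ≤ t') :
    volume (Set.Icc t (t + L) ∩ S) ≤
      volume (Set.Icc t' (t' + L) ∩ S) + ENNReal.ofReal (t' - t) := by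
  have hsub : Set.Icc t (t + L) ∩ S ⊆ (Set.Icc t' (t' + L) ∩ S) ∪ Set.Icc t t' := by
    rintro u ⟨⟨h1, h2⟩, hS⟩
    rcases le_or_gt u t' with h3 | h3
    · exact Or.inr ⟨h1, h3⟩
    · exact Or.inl ⟨⟨h3.le, le_trans h2 (by linarith)⟩, hS⟩
  calc volume (Set.Icc t (t + L) ∩ S) ≤ _ := measure_mono hsub
    _ ≤ volume (Set.Icc t' (t' + L) ∩ S) + volume (Set.Icc t t') := measure_union_le _ _
    _ = volume (Set.Icc t' (t' + L) ∩ S) + ENNReal.ofReal (t' - t) := by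
        rw [Real.volume_Icc]

open Filter Metric Topology Set ENNReal in
/-- If `u¹, u²` are mutually singular absolutely continuous measures with
`u¹ + u² = Lebesgue` and `x` is an interface point, then every open neighborhood of `x`
contains a nondegenerate interval `A` with `u¹ A = u² A = |A| / 2 > 0`. -/
theorem balanced_interval_exists
    (u₁ u₂ : Measure ℝ)
    (hac₁ : u₁ ≪ volume) (hac₂ : u₂ ≪ volume)
    (hsing : u₁ ⟂ₘ u₂)
    (hsum : u₁ + u₂ = volume)
    (x : ℝ) (hx : x ∈ msupp u₁ ∩ msupp u₂)
    (O : Set ℝ) (hO : IsOpen O) (hxO : x ∈ O) :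
    ∃ a b : ℝ, a < b ∧ Set.Icc a b ⊆ O ∧
      u₁ (Set.Icc a b) = volume (Set.Icc a b) / 2 ∧
      u₂ (Set.Icc a b) = volume (Set.Icc a b) / 2 ∧
      0 < u₁ (Set.Icc a b) := by
  obtain ⟨s, hsm, hs1, hs2⟩ := hsing
  set S : Set ℝ := sᶜ with hSdef
  have hSm : MeasurableSet S := hsm.compl
  have hvol : ∀ B : Set ℝ, u₁ B + u₂ B = volume B := by
    intro B
    have := congrArg (fun μ : Measure ℝ => μ B) hsum
    simpa [Measure.add_apply] using this
  -- u₁ A = volume (A ∩ S)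
  have key₁ : ∀ A : Set ℝ, u₁ A = volume (A ∩ S) := by
    intro A
    have h2 : u₁ (A \ S) = 0 := by
      refine measure_mono_null (fun u hu => ?_) hs1
      simpa [hSdef] using hu.2
    have h3 : u₂ (A ∩ S) = 0 :=
      measure_mono_null (fun u hu => hu.2) hs2
    have h4 := measure_inter_add_diff (μ := u₁) A hSm
    have h5 := hvol (A ∩ S)
    rw [h3, add_zero] at h5
    rw [← h4, h2, add_zero, h5]
  -- u₂ A = volume (A \ S)
  have key₂ : ∀ A : Set ℝ, u₂ A = volume (A \ S) := by
    intro A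
    have h2 : u₂ (A ∩ S) = 0 := measure_mono_null (fun u hu => hu.2) hs2
    have h3 : u₁ (A \ S) = 0 := by
      apply measure_mono_null ?_ hs1
      intro u hu
      simpa [hSdef] using hu.2
    have h4 := measure_inter_add_diff (μ := u₂) A hSm
    have h5 := hvol (A \ S)
    rw [h3, zero_add] at h5
    rw [← h4, h2, zero_add, h5]
  -- choose ε with ball x ε ⊆ O
  obtain ⟨ε, hε, hball⟩ := Metric.isOpen_iff.mp hO x hxO
  set δ : ℝ := ε / 8 with hδdef
  have hδ : 0 < δ := by positivity
  -- density points
  have hdens := Besicovitch.ae_tendsto_measure_inter_div (volume : Measure ℝ) S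
  have hdensc := Besicovitch.ae_tendsto_measure_inter_div (volume : Measure ℝ) Sᶜ
  -- find a density point of S in ball x δ
  have hy : ∃ y ∈ ball x δ, Tendsto
      (fun r => volume (S ∩ closedBall y r) / volume (closedBall y r)) (𝓝[>] 0) (𝓝 1) := by
    by_contra hcon
    push_neg at hcon
    have hsub : ball x δ ⊆ {y | ¬ Tendsto
        (fun r => volume (S ∩ closedBall y r) / volume (closedBall y r)) (𝓝[>] 0) (𝓝 1)} := by
      intro y hy; exact hcon y hy
    have h0 : (volume.restrict S) (ball x δ) = 0 := by
      apply measure_mono_null hsub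
      simpa [ae_iff] using hdens
    rw [Measure.restrict_apply measurableSet_ball] at h0
    have := hx.1 δ hδ
    rw [key₁] at this
    exact absurd h0 (ne_of_gt this)
  have hz : ∃ z ∈ ball x δ, Tendsto
      (fun r => volume (Sᶜ ∩ closedBall z r) / volume (closedBall z r)) (𝓝[>] 0) (𝓝 1) := by
    by_contra hcon
    push_neg at hcon
    have hsub : ball x δ ⊆ {y | ¬ Tendsto
        (fun r => volume (Sᶜ ∩ closedBall y r) / volume (closedBall y r)) (𝓝[>] 0) (𝓝 1)} := by
      intro y hy; exact hcon y hy
    have h0 : (volume.restrict Sᶜ) (ball x δ) = 0 := by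
      apply measure_mono_null hsub
      simpa [ae_iff] using hdensc
    rw [Measure.restrict_apply measurableSet_ball] at h0
    have := hx.2 δ hδ
    rw [key₂] at this
    rw [Set.diff_eq] at this
    exact absurd h0 (ne_of_gt this)
  obtain ⟨y, hyball, hytend⟩ := hy
  obtain ⟨z, hzball, hztend⟩ := hz
  -- eventual density estimates
  have hhalf : (1:ℝ≥0∞)/2 < 1 := by
    rw [ENNReal.div_lt_iff (Or.inl two_ne_zero) (Or.inl ENNReal.ofNat_ne_top), one_mul]
    exact ENNReal.one_lt_two
  have hev₁ := hytend.eventually (eventually_gt_nhds hhalf)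
  have hev₂ := hztend.eventually (eventually_gt_nhds hhalf)
  have hev₃ : ∀ᶠ r in 𝓝[>] (0:ℝ), r ∈ Set.Ioo 0 δ :=
    Ioo_mem_nhdsGT_of_mem ⟨le_refl 0, hδ⟩
  obtain ⟨r, h1, h2, h3⟩ := (hev₁.and (hev₂.and hev₃)).exists
  obtain ⟨hrpos, hrδ⟩ := h3
  -- convert density estimates to interval estimates
  have hcbvol : ∀ w : ℝ, volume (closedBall w r) = ENNReal.ofReal (2*r) := by
    intro w; rw [Real.volume_closedBall]
  have hineq : ∀ w : ℝ, ∀ T : Set ℝ,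
      (1:ℝ≥0∞)/2 < volume (T ∩ closedBall w r) / volume (closedBall w r) →
      ENNReal.ofReal r < volume (Set.Icc (w - r) (w + r) ∩ T) := by
    intro w T hw
    rw [ENNReal.lt_div_iff_mul_lt (Or.inl ?_) (Or.inl ?_)] at hw
    · have : (1:ℝ≥0∞)/2 * volume (closedBall w r) = ENNReal.ofReal r := by
        rw [hcbvol, show (2:ℝ)*r = r*2 by ring, ENNReal.ofReal_mul (le_of_lt hrpos),
          ENNReal.ofReal_ofNat, one_div, ← mul_assoc, mul_comm (2:ℝ≥0∞)⁻¹,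
          mul_assoc, ENNReal.inv_mul_cancel two_ne_zero ENNReal.ofNat_ne_top, mul_one]
      rw [this] at hw
      rwa [Set.inter_comm, Real.closedBall_eq_Icc] at hw
    · rw [hcbvol]; simp only [ne_eq, ENNReal.ofReal_eq_zero, not_le]; positivity
    · rw [hcbvol]; exact ENNReal.ofReal_ne_top
  have hy' : ENNReal.ofReal r < volume (Set.Icc (y - r) (y + r) ∩ S) := hineq y S h1
  have hz' : ENNReal.ofReal r < volume (Set.Icc (z - r) (z + r) ∩ Sᶜ) := hineq z Sᶜ h2
  -- set up the continuous function
  set L : ℝ := 2 * r with hLdef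
  have hL : 0 < L := by positivity
  have hIccvol : ∀ t : ℝ, volume (Set.Icc t (t + L)) = ENNReal.ofReal L := by
    intro t; rw [Real.volume_Icc]; congr 1; ring
  have hfin : ∀ t : ℝ, volume (Set.Icc t (t + L) ∩ S) ≠ ∞ := by
    intro t
    apply ne_of_lt (lt_of_le_of_lt (measure_mono Set.inter_subset_left) ?_)
    rw [hIccvol]; exact ENNReal.ofReal_lt_top
  set f : ℝ → ℝ := fun t => (volume (Set.Icc t (t + L) ∩ S)).toReal with hfdef
  have hstep : ∀ a b : ℝ, a ≤ b → f b ≤ f a + (b - a) ∧ f a ≤ f b + (b - a) := by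
    intro a b hab
    constructor
    · have := ENNReal.toReal_mono (by simp [hfin a]) (shift_le S hab (L := L))
      rwa [ENNReal.toReal_add (hfin a) ENNReal.ofReal_ne_top,
        ENNReal.toReal_ofReal (by linarith)] at this
    · have := ENNReal.toReal_mono (by simp [hfin b]) (shift_le' S hab (L := L))
      rwa [ENNReal.toReal_add (hfin b) ENNReal.ofReal_ne_top,
        ENNReal.toReal_ofReal (by linarith)] at this
  have hcont : Continuous f := by
    apply (LipschitzWith.of_dist_le_mul (K := 1) ?_).continuous
    intro a b
    rw [NNReal.coe_one, one_mul, Real.dist_eq, Real.dist_eq, abs_sub_le_iff]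
    rcases le_total a b with hab | hab
    · obtain ⟨hA, hB⟩ := hstep a b hab
      have habs : b - a ≤ |a - b| := by rw [abs_sub_comm]; exact le_abs_self _
      constructor <;> linarith
    · obtain ⟨hA, hB⟩ := hstep b a hab
      have habs : a - b ≤ |a - b| := le_abs_self _
      constructor <;> linarith
  -- endpoint values
  have hyeq : y - r + L = y + r := by rw [hLdef]; ring
  have hzeq : z - r + L = z + r := by rw [hLdef]; ring
  have hfy : r < f (y - r) := by
    show r < (volume (Set.Icc (y - r) (y - r + L) ∩ S)).toReal
    rw [hyeq]
    refine (ENNReal.ofReal_lt_iff_lt_toReal hrpos.le ?_).mp hy'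
    apply ne_of_lt (lt_of_le_of_lt (measure_mono Set.inter_subset_left) ?_)
    rw [Real.volume_Icc]; exact ENNReal.ofReal_lt_top
  have hfz : f (z - r) < r := by
    show (volume (Set.Icc (z - r) (z - r + L) ∩ S)).toReal < r
    rw [hzeq]
    have hsplit : volume (Set.Icc (z-r) (z+r) ∩ S) + volume (Set.Icc (z-r) (z+r) ∩ Sᶜ)
        = ENNReal.ofReal L := by
      have hd := measure_inter_add_diff (μ := (volume : Measure ℝ)) (Set.Icc (z-r) (z+r)) hSm
      rw [Set.diff_eq] at hd
      rw [hd, Real.volume_Icc]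
      congr 1; rw [hLdef]; ring
    have hlt : volume (Set.Icc (z-r) (z+r) ∩ S) < ENNReal.ofReal r := by
      by_contra hge
      push_neg at hge
      have hadd : ENNReal.ofReal r + ENNReal.ofReal r < ENNReal.ofReal L :=
        lt_of_lt_of_le (ENNReal.add_lt_add_of_le_of_lt ENNReal.ofReal_ne_top hge hz') hsplit.le
      rw [← ENNReal.ofReal_add hrpos.le hrpos.le] at hadd
      have h2r := ENNReal.toReal_lt_of_lt_ofReal hadd
      rw [ENNReal.toReal_ofReal (by linarith)] at h2r
      rw [hLdef] at h2r; linarith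
    exact ENNReal.toReal_lt_of_lt_ofReal hlt
  -- intermediate value theorem
  have hivt := intermediate_value_uIcc (a := z - r) (b := y - r) (f := f)
    (hcont.continuousOn)
  have hrmem : r ∈ Set.uIcc (f (z - r)) (f (y - r)) := by
    rw [Set.mem_uIcc]; exact Or.inl ⟨hfz.le, hfy.le⟩
  obtain ⟨t, htmem, htval⟩ := hivt hrmem
  have hval : volume (Set.Icc t (t + L) ∩ S) = ENNReal.ofReal r := by
    rw [← ENNReal.ofReal_toReal (hfin t)]
    exact congrArg ENNReal.ofReal htval
  have hu1 : u₁ (Set.Icc t (t + L)) = volume (Set.Icc t (t + L)) / 2 := by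
    rw [key₁, hval, hIccvol, hLdef, show (2:ℝ)*r = r*2 by ring,
      ENNReal.ofReal_mul hrpos.le, ENNReal.ofReal_ofNat, mul_div_assoc,
      ENNReal.div_self two_ne_zero ENNReal.ofNat_ne_top, mul_one]
  refine ⟨t, t + L, by linarith, ?_, hu1, ?_, ?_⟩
  · -- Icc t (t+L) ⊆ O
    intro u hu
    apply hball
    rw [mem_ball, Real.dist_eq]
    rw [Set.mem_Icc] at hu
    rw [mem_ball, Real.dist_eq] at hyball hzball
    have hy1 := abs_lt.mp hyball
    have hz1 := abs_lt.mp hzball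
    have htb : x - 2*δ < t ∧ t < x + δ := by
      rw [Set.uIcc_eq_union, Set.mem_union, Set.mem_Icc, Set.mem_Icc] at htmem
      rcases htmem with ⟨ha, hb⟩ | ⟨ha, hb⟩ <;> exact ⟨by linarith, by linarith⟩
    have h8 : 8 * δ = ε := by rw [hδdef]; ring
    rw [abs_lt]
    constructor
    · linarith [hu.1, htb.1, hδ]
    · have hub : u ≤ t + L := hu.2
      rw [hLdef] at hub
      linarith [htb.2, hrδ]
  · -- u₂ = vol/2
    have hv := hvol (Set.Icc t (t + L))
    rw [hu1] at hv
    have hhalfsum : volume (Set.Icc t (t + L)) / 2 + volume (Set.Icc t (t + L)) / 2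
        = volume (Set.Icc t (t + L)) := ENNReal.add_halves _
    nth_rewrite 2 [← hhalfsum] at hv
    have hfin2 : volume (Set.Icc t (t + L)) / 2 ≠ ∞ := by
      rw [hIccvol]
      exact ne_of_lt (lt_of_le_of_lt (ENNReal.half_le_self) ENNReal.ofReal_lt_top)
    exact (ENNReal.add_right_inj hfin2).mp hv
  · -- positivity
    rw [key₁, hval]
    exact ENNReal.ofReal_pos.mpr hrpos
end

section
/- Let u¹, u² be mutually singular absolutely continuous nonnegative measures on ℝ with u¹ + u² equal to Lebesgue measure, and let A = (a,b) be an interval with u¹(A) = u²(A) = |A|/2 > 0. Then there exists a subinterval A' ⊆ A with |A'| = |A|/2 and u¹(A') = u²(A') = |A'|/2. -/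
open MeasureTheory

/-- Halving lemma: if `A = (a,b)` satisfies `u¹ A = u² A = |A|/2 > 0`, then there is a
subinterval `A' ⊆ A` of half the length with the same balanced property. -/
theorem balanced_subinterval_exists
    (u₁ u₂ : Measure ℝ)
    (hac₁ : u₁ ≪ volume) (hac₂ : u₂ ≪ volume)
    (hsing : u₁ ⟂ₘ u₂)
    (hsum : u₁ + u₂ = volume)
    (a b : ℝ) (hab : a < b)
    (h₁ : u₁ (Set.Ioo a b) = volume (Set.Ioo a b) / 2)
    (h₂ : u₂ (Set.Ioo a b) = volume (Set.Ioo a b) / 2)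
    (hpos : 0 < u₁ (Set.Ioo a b)) :
    ∃ a' b' : ℝ, a ≤ a' ∧ a' < b' ∧ b' ≤ b ∧ b' - a' = (b - a) / 2 ∧
      u₁ (Set.Ioo a' b') = volume (Set.Ioo a' b') / 2 ∧
      u₂ (Set.Ioo a' b') = volume (Set.Ioo a' b') / 2 := by
  have hle : ∀ s : Set ℝ, u₁ s ≤ volume s := by
    intro s
    rw [← hsum]
    exact Measure.le_iff'.mp (Measure.le_add_right le_rfl) s
  haveI : NullSingletonClass u₁ := ⟨fun x => hac₁ (measure_singleton x)⟩
  have hfin : ∀ s t : ℝ, u₁ (Set.Ioo s t) ≠ ⊤ := by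
    intro s t
    refine ((hle _).trans_lt ?_).ne
    rw [Real.volume_Ioo]
    exact ENNReal.ofReal_lt_top
  obtain ⟨c, hc_def⟩ : ∃ c : ℝ, c = (b - a) / 2 := ⟨_, rfl⟩
  have hc : 0 < c := by rw [hc_def]; linarith
  obtain ⟨F, hF_def⟩ : ∃ F : ℝ → ℝ, F = fun t => (u₁ (Set.Ioo a t)).toReal := ⟨_, rfl⟩
  have hFval : ∀ t : ℝ, F t = (u₁ (Set.Ioo a t)).toReal := fun t => by rw [hF_def]
  -- splitting identity
  have hsplit : ∀ s t : ℝ, a ≤ s → s ≤ t →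
      u₁ (Set.Ioo a s) + u₁ (Set.Ioo s t) = u₁ (Set.Ioo a t) := by
    intro s t has hst
    rcases eq_or_lt_of_le has with h | h
    · subst h
      simp
    · have hunion : Set.Ioo a s ∪ Set.Ico s t = Set.Ioo a t :=
        Set.Ioo_union_Ico_eq_Ioo h hst
      have hICO : u₁ (Set.Ico s t) = u₁ (Set.Ioo s t) :=
        (measure_congr (Ioo_ae_eq_Ico (μ := u₁) (a := s) (b := t))).symm
      have hdisj : Disjoint (Set.Ioo a s) (Set.Ico s t) := by
        rw [Set.disjoint_left]
        rintro x ⟨_, hxs⟩ ⟨hsx, _⟩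
        exact absurd hxs (not_lt.mpr hsx)
      rw [← hICO, ← hunion, measure_union hdisj measurableSet_Ico]
  have hFd : ∀ s t : ℝ, a ≤ s → s ≤ t →
      (u₁ (Set.Ioo s t)).toReal = F t - F s := by
    intro s t has hst
    have hs := hsplit s t has hst
    have h1 := hfin a s
    have h2 := hfin s t
    have hadd : (u₁ (Set.Ioo a s)).toReal + (u₁ (Set.Ioo s t)).toReal
        = (u₁ (Set.Ioo a t)).toReal := by
      rw [← ENNReal.toReal_add h1 h2, hs]
    rw [hFval, hFval]
    linarith
  -- monotonicity and Lipschitz bound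
  have hmono : ∀ s t : ℝ, s ≤ t → F s ≤ F t := by
    intro s t hst
    rw [hFval, hFval]
    exact ENNReal.toReal_mono (hfin a t) (measure_mono (Set.Ioo_subset_Ioo_right hst))
  have hub : ∀ s t : ℝ, s ≤ t → F t ≤ F s + (t - s) := by
    intro s t hst
    have hsub : Set.Ioo a t ⊆ Set.Ioo a s ∪ Set.Ico s t := by
      intro x hx
      rcases lt_or_ge x s with h | h
      · exact Or.inl ⟨hx.1, h⟩
      · exact Or.inr ⟨h, hx.2⟩
    have hb1 : u₁ (Set.Ioo a t) ≤ u₁ (Set.Ioo a s) + ENNReal.ofReal (t - s) := by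
      calc u₁ (Set.Ioo a t) ≤ u₁ (Set.Ioo a s ∪ Set.Ico s t) := measure_mono hsub
        _ ≤ u₁ (Set.Ioo a s) + u₁ (Set.Ico s t) := measure_union_le _ _
        _ ≤ u₁ (Set.Ioo a s) + ENNReal.ofReal (t - s) := by
            refine add_le_add_right ?_ _
            refine (hle _).trans ?_
            rw [Real.volume_Ico]
    rw [hFval, hFval]
    calc (u₁ (Set.Ioo a t)).toReal
        ≤ (u₁ (Set.Ioo a s) + ENNReal.ofReal (t - s)).toReal :=
          ENNReal.toReal_mono (by simp [hfin a s]) hb1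
      _ = (u₁ (Set.Ioo a s)).toReal + (t - s) := by
          rw [ENNReal.toReal_add (hfin a s) ENNReal.ofReal_ne_top,
            ENNReal.toReal_ofReal (by linarith)]
  have hlip : LipschitzWith 1 F := by
    refine LipschitzWith.of_dist_le_mul fun s t => ?_
    rw [Real.dist_eq, Real.dist_eq]
    simp only [NNReal.coe_one, one_mul]
    rcases le_total s t with h | h
    · have h1 := hmono s t h
      have h2 := hub s t h
      rw [abs_of_nonpos (by linarith : F s - F t ≤ 0),
        abs_of_nonpos (by linarith : s - t ≤ 0)]
      linarith
    · have h1 := hmono t s h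
      have h2 := hub t s h
      rw [abs_of_nonneg (by linarith : 0 ≤ F s - F t),
        abs_of_nonneg (by linarith : 0 ≤ s - t)]
      linarith
  obtain ⟨f, hf_def⟩ : ∃ f : ℝ → ℝ,
      f = fun x => F (a + (x + 1) * c) - F (a + x * c) := ⟨_, rfl⟩
  have hfval : ∀ x : ℝ, f x = F (a + (x + 1) * c) - F (a + x * c) :=
    fun x => by rw [hf_def]
  have hfcont : Continuous f := by
    rw [hf_def]
    apply Continuous.sub
    · exact hlip.continuous.comp (by continuity)
    · exact hlip.continuous.comp (by continuity)
  have hfx : ∀ x : ℝ, 0 ≤ x →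
      (u₁ (Set.Ioo (a + x * c) (a + (x + 1) * c))).toReal = f x := by
    intro x hx
    rw [hfval]
    exact hFd _ _ (by nlinarith) (by nlinarith)
  have hFa : F a = 0 := by rw [hFval]; simp
  have hFb : F b = (b - a) / 2 := by
    rw [hFval, h₁, Real.volume_Ioo, ENNReal.toReal_div,
      ENNReal.toReal_ofReal (by linarith)]
    norm_num
  have hsum01 : f 0 + f 1 = (b - a) / 2 := by
    have e1 : a + ((0 : ℝ) + 1) * c = a + c := by ring
    have e2 : a + ((1 : ℝ) + 1) * c = b := by rw [hc_def]; ring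
    have e3 : a + (0 : ℝ) * c = a := by ring
    have e4 : a + (1 : ℝ) * c = a + c := by ring
    rw [hfval, hfval, e1, e2, e3, e4, hFa, hFb]
    ring
  have htarget : (b - a) / 4 ∈ Set.uIcc (f 0) (f 1) := by
    rw [Set.mem_uIcc]
    rcases le_total (f 0) (f 1) with h | h
    · exact Or.inl ⟨by linarith, by linarith⟩
    · exact Or.inr ⟨by linarith, by linarith⟩
  obtain ⟨x, hx, hfxeq⟩ := intermediate_value_uIcc (f := f) (a := (0 : ℝ)) (b := 1)
    hfcont.continuousOn htarget
  rw [Set.uIcc_of_le zero_le_one] at hx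
  obtain ⟨hx0, hx1⟩ := hx
  have hvol : volume (Set.Ioo (a + x * c) (a + (x + 1) * c)) = ENNReal.ofReal c := by
    rw [Real.volume_Ioo]
    congr 1
    ring
  have hu1 : u₁ (Set.Ioo (a + x * c) (a + (x + 1) * c)) = ENNReal.ofReal (c / 2) := by
    have htr := hfx x hx0
    rw [hfxeq] at htr
    rw [← ENNReal.ofReal_toReal (hfin _ _), htr]
    congr 1
    rw [hc_def]
    ring
  have hhalf : ENNReal.ofReal c / 2 = ENNReal.ofReal (c / 2) := by
    rw [ENNReal.ofReal_div_of_pos (by norm_num : (0 : ℝ) < 2), ENNReal.ofReal_ofNat]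
  refine ⟨a + x * c, a + (x + 1) * c, by nlinarith, by nlinarith, ?_,
    by rw [hc_def]; ring, ?_, ?_⟩
  · have : c + c = b - a := by rw [hc_def]; ring
    nlinarith
  · rw [hu1, hvol, hhalf]
  · have hadd : u₁ (Set.Ioo (a + x * c) (a + (x + 1) * c))
        + u₂ (Set.Ioo (a + x * c) (a + (x + 1) * c))
        = volume (Set.Ioo (a + x * c) (a + (x + 1) * c)) := by
      rw [← hsum]; rfl
    rw [hu1, hvol] at hadd
    have hc2 : ENNReal.ofReal c = ENNReal.ofReal (c / 2) + ENNReal.ofReal (c / 2) := by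
      rw [← ENNReal.ofReal_add (by linarith) (by linarith)]
      congr 1
      ring
    rw [hc2] at hadd
    have hu2 : u₂ (Set.Ioo (a + x * c) (a + (x + 1) * c)) = ENNReal.ofReal (c / 2) :=
      (ENNReal.add_right_inj ENNReal.ofReal_ne_top).mp hadd
    rw [hu2, hvol, hhalf]
end

section
/- Let n ≥ 2, ρ ∈ (-1,0) with ρ + cos(π/n) < 0, and λ = arccos(-ρ). Define the vector v on {1,2}^n by v(m) = sin(λ·#₁m)/sin(λn), where #₁m is the number of coordinates of m equal to 1. Then v is in the kernel of the matrix A defined by A(m,m) = (ρ/2)Σ_{i,j} 1_{m_i≠m_j}, A(m,m̂^i) = (1/2)Σ_j 1_{m_i≠m_j}, and A(m,m')=0 otherwise; moreover v((1,…,1)) = 1 and v((2,…,2)) = 0. -/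
open Finset Real

/-- `m` with the `i`-th color flipped. -/
def flipAt {n : ℕ} (m : Fin n → Fin 2) (i : Fin n) : Fin n → Fin 2 :=
  Function.update m i (if m i = 0 then 1 else 0)

lemma flipAt_apply_self {n : ℕ} (m : Fin n → Fin 2) (i : Fin n) :
    flipAt m i i = if m i = 0 then 1 else 0 := by
  simp [flipAt]

lemma flipAt_apply_ne {n : ℕ} (m : Fin n → Fin 2) (i j : Fin n) (h : j ≠ i) :
    flipAt m i j = m j := by
  simp [flipAt, Function.update_of_ne h]

lemma fin2_flip_ne (a : Fin 2) : (if a = 0 then (1 : Fin 2) else 0) ≠ a := by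
  revert a; decide

lemma fin2_eq_one (a : Fin 2) (h : a ≠ 0) : a = 1 := by
  revert a; decide

lemma flipAt_ne {n : ℕ} (m : Fin n → Fin 2) (i : Fin n) : flipAt m i ≠ m := by
  intro h
  have h2 := congrFun h i
  rw [flipAt_apply_self] at h2
  exact fin2_flip_ne (m i) h2

lemma flipAt_inj {n : ℕ} (m : Fin n → Fin 2) : Function.Injective (flipAt m) := by
  intro i j h
  by_contra hij
  have h1 := congrFun h i
  rw [flipAt_apply_self, flipAt_apply_ne m j i hij] at h1
  exact fin2_flip_ne (m i) h1

/-- For `ρ ∈ (-1,0)` with `ρ + cos (π/n) < 0` and `λ = arccos (-ρ)`, the vector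
`v(m) = sin (λ · #₁m) / sin (λ n)` is in the kernel of the coloring-dynamics matrix `A`,
with `v ≡ 1` on the all-`1` coloring and `v ≡ 0` on the all-`2` coloring. Colorings are
modelled as `Fin n → Fin 2` (color 1 ↦ `0`, color 2 ↦ `1`). -/
theorem sine_vector_in_kernel
    (n : ℕ) (hn : 2 ≤ n) (ρ : ℝ) (hρ₁ : -1 < ρ) (hρ₂ : ρ < 0)
    (hcrit : ρ + Real.cos (π / n) < 0)
    (lam : ℝ) (hlam : lam = Real.arccos (-ρ))
    (A : Matrix (Fin n → Fin 2) (Fin n → Fin 2) ℝ)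
    (hA_diag : ∀ m, A m m = (ρ / 2) * ∑ i : Fin n, ∑ j : Fin n,
        (if m i ≠ m j then (1 : ℝ) else 0))
    (hA_flip : ∀ m i, A m (flipAt m i) = (1 / 2) * ∑ j : Fin n,
        (if m i ≠ m j then (1 : ℝ) else 0))
    (hA_other : ∀ m m', m' ≠ m → (∀ i, m' ≠ flipAt m i) → A m m' = 0)
    (v : (Fin n → Fin 2) → ℝ)
    (hv : ∀ m, v m = Real.sin (lam * (Finset.univ.filter (fun i => m i = 0)).card)
        / Real.sin (lam * n)) :
    A.mulVec v = 0 ∧ v (fun _ => 0) = 1 ∧ v (fun _ => 1) = 0 := by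
  have hn0 : (0 : ℝ) < n := by positivity
  have hcos : Real.cos lam = -ρ := by
    rw [hlam, Real.cos_arccos (by linarith) (by linarith)]
  have hlam_pos : 0 < lam := by
    rw [hlam]; exact Real.arccos_pos.mpr (by linarith)
  have hlam_lt : lam < π / n := by
    by_contra h
    push_neg at h
    have h1 : Real.cos lam ≤ Real.cos (π / n) := by
      apply Real.cos_le_cos_of_nonneg_of_le_pi (by positivity) _ h
      rw [hlam]; exact Real.arccos_le_pi _
    rw [hcos] at h1; linarith
  have hln : lam * n < π := by
    have h1 : lam * n < (π / n) * n := mul_lt_mul_of_pos_right hlam_lt hn0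
    rwa [div_mul_cancel₀ _ (ne_of_gt hn0)] at h1
  have hD : 0 < Real.sin (lam * n) := Real.sin_pos_of_pos_of_lt_pi (by positivity) hln
  refine ⟨?_, ?_, ?_⟩
  · funext m
    simp only [Matrix.mulVec, dotProduct, Pi.zero_apply]
    -- reduce to the three kinds of terms
    set S : Finset (Fin n → Fin 2) := insert m (Finset.univ.image (flipAt m)) with hS
    have hmem : m ∉ Finset.univ.image (flipAt m) := by
      simp only [Finset.mem_image, Finset.mem_univ, true_and, not_exists]
      intro i h; exact flipAt_ne m i h
    have hsplit : ∑ m' : Fin n → Fin 2, A m m' * v m'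
        = A m m * v m + ∑ i : Fin n, A m (flipAt m i) * v (flipAt m i) := by
      rw [← Finset.sum_subset (Finset.subset_univ S)]
      · rw [hS, Finset.sum_insert hmem,
          Finset.sum_image (fun i _ j _ h => flipAt_inj m h)]
      · intro m' _ hm'
        rw [hS, Finset.mem_insert, Finset.mem_image] at hm'
        push_neg at hm'
        rw [hA_other m m' hm'.1 (fun i => fun h => hm'.2 i (Finset.mem_univ i) h.symm),
          zero_mul]
    rw [hsplit]
    -- counting
    set k : ℕ := (Finset.univ.filter (fun i => m i = 0)).card with hk
    have hkn : k ≤ n := by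
      calc k ≤ Finset.univ.card := Finset.card_filter_le _ _
        _ = n := by simp
    have hcompl : ((Finset.univ.filter (fun i => ¬ m i = 0)).card : ℝ) = (n : ℝ) - k := by
      have := Finset.card_filter_add_card_filter_not (s := (Finset.univ : Finset (Fin n)))
        (p := fun i => m i = 0)
      simp only [Finset.card_univ, Fintype.card_fin] at this
      have : (Finset.univ.filter (fun i => ¬ m i = 0)).card = n - k := by omega
      rw [this]
      push_cast [Nat.cast_sub hkn]
      ring
    have hrow : ∀ i : Fin n, (∑ j : Fin n, (if m i ≠ m j then (1:ℝ) else 0))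
        = if m i = 0 then (n : ℝ) - k else (k : ℝ) := by
      intro i
      rw [Finset.sum_boole]
      by_cases hmi : m i = 0
      · rw [if_pos hmi, ← hcompl]
        congr 2
        ext j
        simp only [Finset.mem_filter, Finset.mem_univ, true_and, hmi]
        constructor
        · intro h h2; exact h h2.symm
        · intro h h2; exact h h2.symm
      · rw [if_neg hmi]
        congr 2
        ext j
        simp only [Finset.mem_filter, Finset.mem_univ, true_and]
        have hmi1 : m i = 1 := fin2_eq_one _ hmi
        rw [hmi1]
        constructor
        · intro h
          by_contra h2
          exact h (fin2_eq_one _ h2).symm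
        · intro h h2
          rw [h] at h2; exact absurd h2.symm (by decide)
    have hflipcard : ∀ i : Fin n, ((Finset.univ.filter (fun j => flipAt m i j = 0)).card : ℝ)
        = if m i = 0 then (k:ℝ) - 1 else (k:ℝ) + 1 := by
      intro i
      by_cases hmi : m i = 0
      · rw [if_pos hmi]
        have hieq : Finset.univ.filter (fun j => flipAt m i j = 0)
            = (Finset.univ.filter (fun j => m j = 0)).erase i := by
          ext j
          simp only [Finset.mem_filter, Finset.mem_univ, true_and, Finset.mem_erase]
          by_cases hj : j = i
          · subst hj
            rw [flipAt_apply_self, if_pos hmi]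
            simp
          · rw [flipAt_apply_ne m i j hj]
            simp [hj]
        rw [hieq, Finset.card_erase_of_mem (by simp [hmi])]
        have hk1 : 1 ≤ k := Finset.card_pos.mpr ⟨i, by simp [hmi]⟩
        rw [← hk, Nat.cast_sub hk1, Nat.cast_one]
      · rw [if_neg hmi]
        have hieq : Finset.univ.filter (fun j => flipAt m i j = 0)
            = insert i (Finset.univ.filter (fun j => m j = 0)) := by
          ext j
          simp only [Finset.mem_filter, Finset.mem_univ, true_and, Finset.mem_insert]
          by_cases hj : j = i
          · subst hj
            rw [flipAt_apply_self, if_neg hmi]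
            simp
          · rw [flipAt_apply_ne m i j hj]
            simp [hj]
        rw [hieq, Finset.card_insert_of_notMem (by simp [hmi]), ← hk]
        push_cast
        ring
    have hvm : v m = Real.sin (lam * k) / Real.sin (lam * n) := by
      rw [hv, ← hk]
    set D : ℝ := Real.sin (lam * n) with hDdef
    set s1 : ℝ := Real.sin (lam * ((k:ℝ) - 1)) with hs1
    set s2 : ℝ := Real.sin (lam * ((k:ℝ) + 1)) with hs2
    have hvflip : ∀ i : Fin n, v (flipAt m i) = (if m i = 0 then s1 else s2) / D := by
      intro i
      rw [hv, hflipcard i]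
      by_cases hmi : m i = 0 <;> simp [hmi, hs1, hs2]
    have hdiag : (∑ i : Fin n, ∑ j : Fin n, (if m i ≠ m j then (1:ℝ) else 0))
        = 2 * (k:ℝ) * ((n:ℝ) - k) := by
      rw [Finset.sum_congr rfl (fun i _ => hrow i), Finset.sum_ite, Finset.sum_const,
        Finset.sum_const, nsmul_eq_mul, nsmul_eq_mul, hcompl, ← hk]
      ring
    have hsum2 : (∑ i : Fin n, A m (flipAt m i) * v (flipAt m i))
        = (k:ℝ) * ((1/2) * ((n:ℝ) - k) * (s1 / D))
          + ((n:ℝ) - k) * ((1/2) * (k:ℝ) * (s2 / D)) := by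
      rw [Finset.sum_congr rfl (fun i _ => by rw [hA_flip m i, hrow i, hvflip i])]
      have hpt : ∀ i : Fin n, (1/2:ℝ) * (if m i = 0 then (n:ℝ) - k else (k:ℝ))
          * ((if m i = 0 then s1 else s2) / D)
          = if m i = 0 then (1/2:ℝ) * ((n:ℝ) - k) * (s1 / D)
            else (1/2:ℝ) * (k:ℝ) * (s2 / D) := by
        intro i; by_cases hmi : m i = 0 <;> simp [hmi]
      rw [Finset.sum_congr rfl (fun i _ => hpt i), Finset.sum_ite, Finset.sum_const,
        Finset.sum_const, nsmul_eq_mul, nsmul_eq_mul, hcompl, ← hk]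
    rw [hA_diag m, hdiag, hvm, hsum2]
    have hkey : s1 + s2 = 2 * Real.sin (lam * (k:ℝ)) * Real.cos lam := by
      rw [hs1, hs2, mul_sub, mul_add, mul_one, Real.sin_sub, Real.sin_add]
      ring
    rw [div_eq_mul_inv (Real.sin (lam * (k:ℝ))), div_eq_mul_inv s1, div_eq_mul_inv s2]
    linear_combination ((1/2) * (k:ℝ) * ((n:ℝ) - k) * D⁻¹) * hkey
      + ((k:ℝ) * ((n:ℝ) - k) * Real.sin (lam * (k:ℝ)) * D⁻¹) * hcos
  · rw [hv]
    have : ((Finset.univ : Finset (Fin n)).filter (fun i => (fun _ => (0:Fin 2)) i = 0)) = Finset.univ := by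
      simp
    rw [this]
    simp only [Finset.card_univ, Fintype.card_fin]
    exact div_self (ne_of_gt hD)
  · rw [hv]
    have : ((Finset.univ : Finset (Fin n)).filter (fun i => (fun _ => (1:Fin 2)) i = 0)) = ∅ := by
      simp
    rw [this]
    simp
end
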